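/- Let s̃l₂ = sl₂ ⊗ ℂ[t,t⁻¹] ⊕ ℂc ⊕ ℂd be the extended affine Lie algebra of sl₂. The map σ defined on generators by σ(e(i)) = f(i+1), σ(f(i)) = e(i−1), σ(h(i)) = −h(i) + δ_{i,0}c, σ(c) = c, σ(d) = d + h(0)/2 extends to a Lie algebra automorphism of s̃l₂. -/

import Mathlib

/-- the assignment `σ(e(i)) = f(i+1)`, `σ(f(i)) = e(i−1)`,
`σ(h(i)) = −h(i) + δ_{i,0}c`, `σ(c) = c`, `σ(d) = d + h(0)/2` extends to a Lie algebra
automorphism of the extended affine Lie algebra `s̃l₂`, presented here as a complex Lie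
algebra `L` with basis `{e(i), f(i), h(i) : i ∈ ℤ} ∪ {c, d}` and the standard affine
brackets. -/
theorem stmt15 {L : Type*} [LieRing L] [LieAlgebra ℂ L]
    (e f h : ℤ → L) (c d : L)
    (bb : Module.Basis ((ℤ × Fin 3) ⊕ Fin 2) ℂ L)
    (hbe : ∀ i : ℤ, e i = bb (Sum.inl (i, 0)))
    (hbf : ∀ i : ℤ, f i = bb (Sum.inl (i, 1)))
    (hbh : ∀ i : ℤ, h i = bb (Sum.inl (i, 2)))
    (hbc : c = bb (Sum.inr 0)) (hbd : d = bb (Sum.inr 1))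
    (hef : ∀ i j : ℤ, ⁅e i, f j⁆ = h (i + j) + (if i + j = 0 then (i : ℂ) • c else 0))
    (hhe : ∀ i j : ℤ, ⁅h i, e j⁆ = (2 : ℂ) • e (i + j))
    (hhf : ∀ i j : ℤ, ⁅h i, f j⁆ = (-2 : ℂ) • f (i + j))
    (hhh : ∀ i j : ℤ, ⁅h i, h j⁆ = if i + j = 0 then ((2 * i : ℤ) : ℂ) • c else 0)
    (hee : ∀ i j : ℤ, ⁅e i, e j⁆ = 0)
    (hff : ∀ i j : ℤ, ⁅f i, f j⁆ = 0)
    (hde : ∀ n : ℤ, ⁅d, e n⁆ = (n : ℂ) • e n)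
    (hdf : ∀ n : ℤ, ⁅d, f n⁆ = (n : ℂ) • f n)
    (hdh : ∀ n : ℤ, ⁅d, h n⁆ = (n : ℂ) • h n)
    (hc : ∀ x : L, ⁅c, x⁆ = 0) :
    ∃ σ : L ≃ₗ⁅ℂ⁆ L,
      (∀ i : ℤ, σ (e i) = f (i + 1)) ∧
      (∀ i : ℤ, σ (f i) = e (i - 1)) ∧
      (∀ i : ℤ, σ (h i) = -h i + (if i = 0 then c else 0)) ∧
      σ c = c ∧
      σ d = d + (2⁻¹ : ℂ) • h 0 := by
  classical
  have hxc : ∀ x : L, ⁅x, c⁆ = 0 := fun x => by rw [← lie_skew, hc, neg_zero]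
  have hfe : ∀ i j : ℤ, ⁅f i, e j⁆ = -(h (i + j) + (if i + j = 0 then (j : ℂ) • c else 0)) :=
    fun i j => by rw [← lie_skew, hef j i, add_comm j i]
  have heh : ∀ i j : ℤ, ⁅e i, h j⁆ = -((2 : ℂ) • e (i + j)) :=
    fun i j => by rw [← lie_skew, hhe j i, add_comm j i]
  have hfh : ∀ i j : ℤ, ⁅f i, h j⁆ = -((-2 : ℂ) • f (i + j)) :=
    fun i j => by rw [← lie_skew, hhf j i, add_comm j i]
  have hed : ∀ n : ℤ, ⁅e n, d⁆ = -((n : ℂ) • e n) := fun n => by rw [← lie_skew, hde]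
  have hfd : ∀ n : ℤ, ⁅f n, d⁆ = -((n : ℂ) • f n) := fun n => by rw [← lie_skew, hdf]
  have hhd : ∀ n : ℤ, ⁅h n, d⁆ = -((n : ℂ) • h n) := fun n => by rw [← lie_skew, hdh]
  set g : (ℤ × Fin 3) ⊕ Fin 2 → L := Sum.elim
    (fun p => ![f (p.1 + 1), e (p.1 - 1), -h p.1 + (if p.1 = 0 then c else 0)] p.2)
    ![c, d + (2⁻¹ : ℂ) • h 0] with hg
  set g' : (ℤ × Fin 3) ⊕ Fin 2 → L := Sum.elim
    (fun p => ![f (p.1 + 1), e (p.1 - 1), -h p.1 + (if p.1 = 0 then c else 0)] p.2)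
    ![c, d + (2⁻¹ : ℂ) • h 0 - (2⁻¹ : ℂ) • c] with hg'
  set S : L →ₗ[ℂ] L := bb.constr ℂ g with hSdef
  set T : L →ₗ[ℂ] L := bb.constr ℂ g' with hTdef
  have hSe : ∀ i : ℤ, S (e i) = f (i + 1) := fun i => by
    conv_lhs => rw [hbe, hSdef, Module.Basis.constr_basis]; simp [hg]
  have hSf : ∀ i : ℤ, S (f i) = e (i - 1) := fun i => by
    conv_lhs => rw [hbf, hSdef, Module.Basis.constr_basis]; simp [hg]
  have hSh : ∀ i : ℤ, S (h i) = -h i + (if i = 0 then c else 0) := fun i => by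
    conv_lhs => rw [hbh, hSdef, Module.Basis.constr_basis]; simp [hg]
  have hSc : S c = c := by conv_lhs => rw [hbc, hSdef, Module.Basis.constr_basis]; simp [hg]
  have hSd : S d = d + (2⁻¹ : ℂ) • h 0 := by conv_lhs => rw [hbd, hSdef, Module.Basis.constr_basis]; simp [hg]
  have hTe : ∀ i : ℤ, T (e i) = f (i + 1) := fun i => by
    conv_lhs => rw [hbe, hTdef, Module.Basis.constr_basis]; simp [hg']
  have hTf : ∀ i : ℤ, T (f i) = e (i - 1) := fun i => by
    conv_lhs => rw [hbf, hTdef, Module.Basis.constr_basis]; simp [hg']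
  have hTh : ∀ i : ℤ, T (h i) = -h i + (if i = 0 then c else 0) := fun i => by
    conv_lhs => rw [hbh, hTdef, Module.Basis.constr_basis]; simp [hg']
  have hTc : T c = c := by conv_lhs => rw [hbc, hTdef, Module.Basis.constr_basis]; simp [hg']
  have hTd : T d = d + (2⁻¹ : ℂ) • h 0 - (2⁻¹ : ℂ) • c := by
    conv_lhs => rw [hbd, hTdef, Module.Basis.constr_basis]; simp [hg']
  have hk3 : ∀ k : Fin 3, k = 0 ∨ k = 1 ∨ k = 2 := by decide
  have hk2 : ∀ m : Fin 2, m = 0 ∨ m = 1 := by decide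
  have hTS : ∀ x, T (S x) = x := by
    suffices hs : T.comp S = LinearMap.id by
      intro x; exact congrArg (fun φ => φ x) hs
    apply bb.ext
    rintro (⟨i, k⟩ | m)
    · rcases hk3 k with rfl | rfl | rfl
      · simp only [LinearMap.comp_apply, LinearMap.id_apply, ← hbe i, hSe, hTf]
        congr 1; ring
      · simp only [LinearMap.comp_apply, LinearMap.id_apply, ← hbf i, hSf, hTe]
        congr 1; ring
      · simp only [LinearMap.comp_apply, LinearMap.id_apply, ← hbh i, hSh, map_add, map_neg, hTh]
        by_cases hi : i = 0 <;> simp [hi, hTc]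
    · rcases hk2 m with rfl | rfl
      · simp only [LinearMap.comp_apply, LinearMap.id_apply, ← hbc, hSc, hTc]
      · simp only [LinearMap.comp_apply, LinearMap.id_apply, ← hbd, hSd, map_add, map_smul, hTd, hTh]
        simp
  have hST : ∀ x, S (T x) = x := by
    suffices hs : S.comp T = LinearMap.id by
      intro x; exact congrArg (fun φ => φ x) hs
    apply bb.ext
    rintro (⟨i, k⟩ | m)
    · rcases hk3 k with rfl | rfl | rfl
      · simp only [LinearMap.comp_apply, LinearMap.id_apply, ← hbe i, hTe, hSf]
        congr 1; ring
      · simp only [LinearMap.comp_apply, LinearMap.id_apply, ← hbf i, hTf, hSe]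
        congr 1; ring
      · simp only [LinearMap.comp_apply, LinearMap.id_apply, ← hbh i, hTh, map_add, map_neg, hSh]
        by_cases hi : i = 0 <;> simp [hi, hSc]
    · rcases hk2 m with rfl | rfl
      · simp only [LinearMap.comp_apply, LinearMap.id_apply, ← hbc, hTc, hSc]
      · simp only [LinearMap.comp_apply, LinearMap.id_apply, ← hbd, hTd, map_add, map_sub,
          map_smul, hSd, hSh, hSc]
        simp
  have hifc : ∀ (x : L) (p : Prop) (_ : Decidable p), ⁅x, if p then c else 0⁆ = 0 := by
    intro x p hp; split_ifs
    · exact hxc x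
    · exact lie_zero x
  have hcif : ∀ (x : L) (p : Prop) (_ : Decidable p), ⁅(if p then c else 0 : L), x⁆ = 0 := by
    intro x p hp; split_ifs
    · exact hc x
    · exact zero_lie x
  have hSif : ∀ (p : Prop) (_ : Decidable p) (z : ℂ),
      S (if p then z • c else 0) = if p then z • c else 0 := by
    intro p hp z; split_ifs
    · rw [map_smul, hSc]
    · exact map_zero S
  have hb : ∀ b1 b2, ⁅S (bb b1), S (bb b2)⁆ = S ⁅bb b1, bb b2⁆ := by
    rintro (⟨i, k⟩ | m) (⟨j, l⟩ | n)
    · rcases hk3 k with rfl | rfl | rfl <;> rcases hk3 l with rfl | rfl | rfl <;>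
        simp only [← hbe, ← hbf, ← hbh]
      -- e e
      · rw [hSe, hSe, hff, hee, map_zero]
      -- e f
      · rw [hSe, hSf, hfe, hef, map_add, hSh, hSif]
        have h1 : i + 1 + (j - 1) = i + j := by ring
        rw [h1]
        by_cases hij : i + j = 0
        · rw [if_pos hij, if_pos hij, if_pos hij]
          have hji : (j : ℂ) = -(i : ℂ) := by
            have : j = -i := by omega
            rw [this]; push_cast; ring
          push_cast [hji]
          module
        · rw [if_neg hij, if_neg hij, if_neg hij]
          simp
      -- e h
      · rw [hSe, hSh, heh, map_neg, map_smul, hSe]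
        rw [lie_add, hifc, add_zero, lie_neg, hfh]
        have h1 : i + 1 + j = i + j + 1 := by ring
        rw [h1]
        module
      -- f e
      · rw [hSf, hSe, hef, hfe, map_neg, map_add, hSh, hSif]
        have h1 : i - 1 + (j + 1) = i + j := by ring
        rw [h1]
        by_cases hij : i + j = 0
        · rw [if_pos hij, if_pos hij, if_pos hij]
          have hji : (j : ℂ) = -(i : ℂ) := by
            have : j = -i := by omega
            rw [this]; push_cast; ring
          push_cast [hji]
          module
        · rw [if_neg hij, if_neg hij, if_neg hij]
          simp
      -- f f
      · rw [hSf, hSf, hee, hff, map_zero]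
      -- f h
      · rw [hSf, hSh, hfh, map_neg, map_smul, hSf]
        rw [lie_add, hifc, add_zero, lie_neg, heh]
        have h1 : i - 1 + j = i + j - 1 := by ring
        rw [h1]
        module
      -- h e
      · rw [hSh, hSe, hhe, map_smul, hSe]
        rw [add_lie, hcif, add_zero, neg_lie, hhf]
        have h1 : i + (j + 1) = i + j + 1 := by ring
        rw [h1]
        module
      -- h f
      · rw [hSh, hSf, hhf, map_smul, hSf]
        rw [add_lie, hcif, add_zero, neg_lie, hhe]
        have h1 : i + (j - 1) = i + j - 1 := by ring
        rw [h1]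
        module
      -- h h
      · rw [hSh, hSh, hhh]
        rw [add_lie, hcif, add_zero, neg_lie, lie_add, hifc, add_zero, lie_neg, hhh, neg_neg]
        rw [show S (if i + j = 0 then ((2 * i : ℤ) : ℂ) • c else 0)
              = if i + j = 0 then ((2 * i : ℤ) : ℂ) • c else 0 from hSif _ _ _]
    · rcases hk2 n with rfl | rfl
      -- x c
      · rcases hk3 k with rfl | rfl | rfl <;>
          simp only [← hbe, ← hbf, ← hbh, ← hbc] <;>
          rw [hSc] <;> rw [hxc, hxc, map_zero]
      -- x d
      · rcases hk3 k with rfl | rfl | rfl <;>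
          simp only [← hbe, ← hbf, ← hbh, ← hbd]
        · -- e d
          rw [hSe, hSd, hed, map_neg, map_smul, hSe]
          rw [lie_add, hfd, lie_smul, hfh]
          have h1 : i + 1 + 0 = i + 1 := by ring
          rw [h1]
          push_cast
          module
        · -- f d
          rw [hSf, hSd, hfd, map_neg, map_smul, hSf]
          rw [lie_add, hed, lie_smul, heh]
          have h1 : i - 1 + 0 = i - 1 := by ring
          rw [h1]
          push_cast
          module
        · -- h d
          rw [hSh, hSd, hhd, map_neg, map_smul, hSh]
          rw [add_lie, hcif, add_zero, neg_lie, lie_add, hhd, lie_smul, hhh]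
          have h2 : (if i + 0 = 0 then ((2 * i : ℤ) : ℂ) • c else 0) = 0 := by
            split_ifs with h0
            · have : i = 0 := by omega
              simp [this]
            · rfl
          rw [h2]
          have h3 : (i : ℂ) • (if i = 0 then c else 0) = 0 := by
            split_ifs with h0
            · simp [h0]
            · simp
          rw [smul_add, h3]
          module
    · -- c or d on the left, e/f/h on the right
      rcases hk2 m with rfl | rfl
      · simp only [← hbc]
        rw [hSc, hc, hc, map_zero]
      · rcases hk3 l with rfl | rfl | rfl <;>
          simp only [← hbd, ← hbe, ← hbf, ← hbh]
        · -- d e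
          rw [hSd, hSe, hde, map_smul, hSe]
          rw [add_lie, hdf, smul_lie, hhf]
          have h1 : 0 + (j + 1) = j + 1 := by ring
          rw [h1]
          push_cast
          module
        · -- d f
          rw [hSd, hSf, hdf, map_smul, hSf]
          rw [add_lie, hde, smul_lie, hhe]
          have h1 : 0 + (j - 1) = j - 1 := by ring
          rw [h1]
          push_cast
          module
        · -- d h
          rw [hSd, hSh, hdh, map_smul, hSh]
          rw [lie_add, hifc, add_zero, lie_neg, add_lie, hdh, smul_lie, hhh]
          have h2 : (if 0 + j = 0 then ((2 * 0 : ℤ) : ℂ) • c else 0) = 0 := by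
            split_ifs <;> simp
          rw [h2]
          have h3 : (j : ℂ) • (if j = 0 then c else 0) = 0 := by
            split_ifs with h0
            · simp [h0]
            · simp
          rw [smul_add, h3]
          module
    · rcases hk2 m with rfl | rfl
      · simp only [← hbc]
        rw [hSc, hc, hc, map_zero]
      · rcases hk2 n with rfl | rfl <;> simp only [← hbc, ← hbd]
        · -- d c
          rw [hSd, hSc, hxc, hxc, map_zero]
        · -- d d
          rw [hSd, lie_self, lie_self, map_zero]
  have key : ∀ x y : L, ⁅S x, S y⁆ = S ⁅x, y⁆ := by
    let F : L →ₗ[ℂ] L →ₗ[ℂ] L := LinearMap.mk₂ ℂ (fun x y => ⁅S x, S y⁆)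
      (fun x x' y => by simp [add_lie]) (fun a x y => by simp [smul_lie])
      (fun x y y' => by simp [lie_add]) (fun a x y => by simp [lie_smul])
    let G : L →ₗ[ℂ] L →ₗ[ℂ] L := LinearMap.mk₂ ℂ (fun x y => S ⁅x, y⁆)
      (fun x x' y => by simp [add_lie]) (fun a x y => by simp [smul_lie])
      (fun x y y' => by simp [lie_add]) (fun a x y => by simp [lie_smul])
    have hFG : F = G := by
      apply bb.ext
      intro b1
      apply bb.ext
      intro b2
      exact hb b1 b2
    intro x y
    exact LinearMap.congr_fun (LinearMap.congr_fun hFG x) y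
  refine ⟨{ toLinearMap := S, map_lie' := fun {x y} => (key x y).symm,
            invFun := T, left_inv := hTS, right_inv := hST }, hSe, hSf, hSh, hSc, hSd⟩
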